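/- Lemma on filtered modules: let L be a Lie algebra over ℂ with a distinguished element ∂ and a descending chain of subspaces L ⊇ L₀ ⊇ L₁ ⊇ … with [∂, Lₙ] = L_{n-1} for all n > 0. Let V be an L-module, Vₙ = {v ∈ V : Lₙ v = 0}, and suppose Vₙ ≠ 0 for n ≫ 0. Let N be the minimal index with V_N ≠ 0 and assume N > 0. Then any ℂ-linearly independent set v₁, v₂, … of vectors of V_N generating ℂ[∂]V_N as a ℂ[∂]-module is a basis of V_N over ℂ and a free set of generators of the ℂ[∂]-module ℂ[∂]V_N. -/

import Mathlib

/-- Key lemma on filtered modules: let `L` be a Lie algebra over ℂ with a distinguished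
element `∂` and a descending chain of subspaces `L ⊇ L₀ ⊇ L₁ ⊇ …` with `[∂, Lₙ] = L_{n-1}`
for `n > 0`. Let `V` be an `L`-module, `Vₙ = {v : Lₙ v = 0}`, suppose `Vₙ ≠ 0` for `n ≫ 0`,
and let `N > 0` be minimal with `V_N ≠ 0`. Then any ℂ-linearly independent family of vectors
of `V_N` generating `ℂ[∂]V_N` as a `ℂ[∂]`-module is a basis of `V_N` over ℂ and a free set of
generators of the `ℂ[∂]`-module `ℂ[∂]V_N`. -/
theorem filtered_module_lemma
    {L : Type*} [LieRing L] [LieAlgebra ℂ L]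
    {V : Type*} [AddCommGroup V] [Module ℂ V] [LieRingModule L V] [LieModule ℂ L V]
    (dl : L) (C : ℕ → Submodule ℂ L)
    (hdesc : ∀ n : ℕ, C (n + 1) ≤ C n)
    (hbr : ∀ n : ℕ, 0 < n → Submodule.map ((LieAlgebra.ad ℂ L dl) : L →ₗ[ℂ] L) (C n)
      = C (n - 1))
    -- the subspaces Vₙ = {v ∈ V ∣ Lₙ v = 0}
    (Vn : ℕ → Submodule ℂ V)
    (hVn : ∀ n : ℕ, ∀ v : V, v ∈ Vn n ↔ ∀ x ∈ C n, ⁅x, v⁆ = 0)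
    (hev : ∃ n₀ : ℕ, ∀ n ≥ n₀, Vn n ≠ ⊥)
    (N : ℕ) (hNpos : 0 < N) (hN : Vn N ≠ ⊥) (hNmin : ∀ k < N, Vn k = ⊥)
    -- the endomorphism by which ∂ acts on V
    (E : Module.End ℂ V) (hE : ∀ v : V, E v = ⁅dl, v⁆)
    {ι : Type*} (v : ι → V) (hvmem : ∀ i, v i ∈ Vn N)
    (hli : LinearIndependent ℂ v)
    (hgen : ∀ x ∈ Vn N, x ∈ Submodule.span ℂ {y | ∃ (k : ℕ) (i : ι), y = (⇑E)^[k] (v i)}) :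
    -- `v` is a basis of `V_N` over ℂ …
    ((Vn N : Set V) ⊆ (Submodule.span ℂ (Set.range v) : Set V)) ∧
    -- … and a free set of generators of the `ℂ[∂]`-module `ℂ[∂]V_N`
    (∀ c : ι →₀ Polynomial ℂ,
      (c.sum fun i p => Polynomial.aeval E p (v i)) = 0 → c = 0) := by
  classical
  -- monotonicity of the chain
  have hmono0 : ∀ (b m : ℕ), C (b + m) ≤ C b := by
    intro b m
    induction m with
    | zero => exact le_rfl
    | succ m ih => exact (hdesc (b + m)).trans ih
  have hmono : ∀ a b : ℕ, b ≤ a → C a ≤ C b := by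
    intro a b h
    obtain ⟨m, rfl⟩ := Nat.exists_eq_add_of_le h
    exact hmono0 b m
  -- bracket with dl moves down the chain
  have hDmem : ∀ n : ℕ, 0 < n → ∀ x ∈ C n, ⁅dl, x⁆ ∈ C (n - 1) := by
    intro n hn x hx
    rw [← hbr n hn]
    exact ⟨x, hx, by simp [LieAlgebra.ad_apply]⟩
  have hDsurj : ∀ n : ℕ, 0 < n → ∀ y ∈ C (n - 1), ∃ x ∈ C n, ⁅dl, x⁆ = y := by
    intro n hn y hy
    rw [← hbr n hn] at hy
    rcases hy with ⟨x, hx, hxy⟩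
    exact ⟨x, hx, by simpa [LieAlgebra.ad_apply] using hxy⟩
  -- Lemma A : E^[k] maps V_N into V_{N+k}
  have lemA : ∀ (u : V), (∀ x ∈ C N, ⁅x, u⁆ = 0) →
      ∀ (k : ℕ), ∀ x ∈ C (N + k), ⁅x, (⇑E)^[k] u⁆ = 0 := by
    intro u hu k
    induction k with
    | zero => simpa using hu
    | succ k ih =>
      intro x hx
      rw [Function.iterate_succ_apply', hE]
      rw [leibniz_lie]
      have h1 : ⁅x, (⇑E)^[k] u⁆ = 0 :=
        ih x (hmono (N + (k + 1)) (N + k) (by omega) hx)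
      have h2 : ⁅dl, x⁆ ∈ C (N + k) := by
        have := hDmem (N + (k + 1)) (by omega) x hx
        simpa using this
      have h3 : ⁅⁅x, dl⁆, (⇑E)^[k] u⁆ = 0 := by
        rw [← lie_skew x dl, neg_lie, ih _ h2, neg_zero]
      rw [h1, h3, lie_zero, add_zero]
  -- Lemma B : the top-term computation
  have lemB : ∀ (u : V), (∀ x ∈ C N, ⁅x, u⁆ = 0) →
      ∀ (m : ℕ), ∀ z ∈ C (N + m),
        ⁅z, (⇑E)^[m + 1] u⁆ = ((-1 : ℂ) ^ (m + 1)) • ⁅(fun x : L => ⁅dl, x⁆)^[m + 1] z, u⁆ := by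
    intro u hu m
    induction m with
    | zero =>
      intro z hz
      rw [Function.iterate_succ_apply', Function.iterate_zero_apply, hE, leibniz_lie,
        hu z hz, lie_zero, add_zero, ← lie_skew z dl, neg_lie]
      simp
    | succ m ih =>
      intro z hz
      rw [Function.iterate_succ_apply' (⇑E) (m + 1), hE, leibniz_lie]
      have h1 : ⁅z, (⇑E)^[m + 1] u⁆ = 0 := lemA u hu (m + 1) z hz
      have h2 : ⁅dl, z⁆ ∈ C (N + m) := by
        have := hDmem (N + (m + 1)) (by omega) z hz
        simpa using this
      rw [h1, lie_zero, add_zero, ← lie_skew z dl, neg_lie, ih ⁅dl, z⁆ h2,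
        ← Function.iterate_succ_apply (fun x : L => ⁅dl, x⁆) (m + 1) z]
      rw [pow_succ ((-1 : ℂ)) (m + 1), mul_comm, mul_smul, neg_one_smul]
  -- surjectivity of the iterated bracket onto C (N-1)
  have lemS : ∀ (k : ℕ), ∀ y ∈ C (N - 1), ∃ z ∈ C (N - 1 + k),
      (fun x : L => ⁅dl, x⁆)^[k] z = y := by
    intro k
    induction k with
    | zero => intro y hy; exact ⟨y, by simpa using hy, rfl⟩
    | succ k ih =>
      intro y hy
      rcases ih y hy with ⟨z, hz, hzy⟩
      have hpos : 0 < N - 1 + k + 1 := by omega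
      rcases hDsurj (N - 1 + k + 1) hpos z (by simpa using hz) with ⟨z', hz', hz'z⟩
      refine ⟨z', by rw [← add_assoc]; exact hz', ?_⟩
      rw [Function.iterate_succ_apply, hz'z, hzy]
  -- Main lemma
  have lemM : ∀ (K : ℕ) (w : ℕ → V), (∀ k, ∀ x ∈ C N, ⁅x, w k⁆ = 0) →
      (∀ x ∈ C N, ⁅x, ∑ k ∈ Finset.range (K + 1), (⇑E)^[k] (w k)⁆ = 0) →
      ∀ k, 1 ≤ k → k ≤ K → w k = 0 := by
    intro K
    induction K with
    | zero => intro w _ _ k h1 h2; omega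
    | succ K ih =>
      intro w hw hsum
      have htop : w (K + 1) = 0 := by
        have hmem : w (K + 1) ∈ Vn (N - 1) := by
          rw [hVn]
          intro y hy
          rcases lemS (K + 1) y hy with ⟨z, hz, hzy⟩
          have hzN : z ∈ C (N + K) := by
            have : N - 1 + (K + 1) = N + K := by omega
            rwa [this] at hz
          have h0 : ⁅z, ∑ k ∈ Finset.range (K + 2), (⇑E)^[k] (w k)⁆ = 0 :=
            hsum z (hmono (N + K) N (by omega) hzN)
          have hls : ⁅z, ∑ k ∈ Finset.range (K + 2), (⇑E)^[k] (w k)⁆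
              = ∑ k ∈ Finset.range (K + 2), ⁅z, (⇑E)^[k] (w k)⁆ := by
            exact map_sum (LieModule.toEnd ℂ L V z) (fun k => (⇑E)^[k] (w k))
              (Finset.range (K + 2))
          rw [hls] at h0
          rw [Finset.sum_eq_single (K + 1)] at h0
          · rw [lemB (w (K + 1)) (hw (K + 1)) K z hzN, hzy] at h0
            have hne : ((-1 : ℂ) ^ (K + 1)) ≠ 0 := by
              simp
            exact (smul_eq_zero.mp h0).resolve_left hne
          · intro k hk hkne
            have hk' : k ≤ K := by
              simp only [Finset.mem_range] at hk; omega
            exact lemA (w k) (hw k) k z (hmono (N + K) (N + k) (by omega) hzN)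
          · intro h; exact absurd (Finset.mem_range.mpr (by omega)) h
        rw [hNmin (N - 1) (by omega)] at hmem
        simpa using hmem
      have hsum' : ∀ x ∈ C N, ⁅x, ∑ k ∈ Finset.range (K + 1), (⇑E)^[k] (w k)⁆ = 0 := by
        intro x hx
        have := hsum x hx
        rw [Finset.sum_range_succ, htop] at this
        have hz : (⇑E)^[K + 1] (0 : V) = 0 := Function.iterate_fixed (map_zero E) (K + 1)
        rwa [hz, add_zero] at this
      intro k h1 h2
      rcases Nat.lt_or_ge k (K + 1) with h | h
      · exact ih w hw hsum' k h1 (by omega)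
      · have : k = K + 1 := by omega
        rw [this]; exact htop
  -- the linear map from polynomial coefficients to V
  let φ : ι → (Polynomial ℂ →ₗ[ℂ] V) := fun i =>
    { toFun := fun p => Polynomial.aeval E p (v i)
      map_add' := by intro p q; simp
      map_smul' := by intro a p; simp }
  let T : (ι →₀ Polynomial ℂ) →ₗ[ℂ] V := Finsupp.lsum ℂ φ
  have hT : ∀ c : ι →₀ Polynomial ℂ, T c = c.sum fun i p => Polynomial.aeval E p (v i) := by
    intro c; rfl
  -- key computation: decomposition of T c
  have key : ∀ c : ι →₀ Polynomial ℂ, (∀ x ∈ C N, ⁅x, T c⁆ = 0) →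
      (T c = ∑ i ∈ c.support, (c i).coeff 0 • v i) ∧
      (∀ k : ℕ, 1 ≤ k → ∑ i ∈ c.support, (c i).coeff k • v i = 0) := by
    intro c hc
    set K := c.support.sup fun i => (c i).natDegree with hK
    set w : ℕ → V := fun k => ∑ i ∈ c.support, (c i).coeff k • v i with hw
    have hwmem : ∀ k, ∀ x ∈ C N, ⁅x, w k⁆ = 0 := by
      intro k
      have : w k ∈ Vn N := Submodule.sum_mem _ fun i _ => Submodule.smul_mem _ _ (hvmem i)
      exact (hVn N (w k)).mp this
    have hdecomp : T c = ∑ k ∈ Finset.range (K + 1), (⇑E)^[k] (w k) := by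
      rw [hT, Finsupp.sum]
      have hterm : ∀ i ∈ c.support,
          Polynomial.aeval E (c i) (v i)
            = ∑ k ∈ Finset.range (K + 1), (c i).coeff k • (⇑E)^[k] (v i) := by
        intro i hi
        rw [Polynomial.aeval_endomorphism]
        rw [Polynomial.sum_over_range' (c i) (by intro n; simp)
          (K + 1) (Nat.lt_succ_of_le (Finset.le_sup (f := fun i => (c i).natDegree) hi))]
        refine Finset.sum_congr rfl fun k _ => ?_
        rw [Module.End.pow_apply]
      rw [Finset.sum_congr rfl hterm, Finset.sum_comm]
      refine Finset.sum_congr rfl fun k _ => ?_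
      rw [hw]
      rw [← Module.End.pow_apply, map_sum]
      refine Finset.sum_congr rfl fun i _ => ?_
      rw [map_smul, Module.End.pow_apply]
    have hhighzero : ∀ k, 1 ≤ k → w k = 0 := by
      intro k h1
      rcases Nat.lt_or_ge K k with h | h
      · rw [hw]
        refine Finset.sum_eq_zero fun i hi => ?_
        have : (c i).natDegree < k := lt_of_le_of_lt (Finset.le_sup (f := fun i => (c i).natDegree) hi) h
        rw [Polynomial.coeff_eq_zero_of_natDegree_lt this, zero_smul]
      · exact lemM K w hwmem (by rw [← hdecomp]; exact hc) k h1 h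
    constructor
    · rw [hdecomp, Finset.sum_eq_single 0]
      · rfl
      · intro k hk hkne
        rw [hhighzero k (by omega), Function.iterate_fixed (map_zero E) k]
      · intro h; exact absurd (Finset.mem_range.mpr (by omega)) h
    · exact hhighzero
  constructor
  · -- first conclusion
    intro x hx
    have hx' : x ∈ Vn N := hx
    have hspan := hgen x hx'
    have hsub : Submodule.span ℂ {y | ∃ (k : ℕ) (i : ι), y = (⇑E)^[k] (v i)}
        ≤ LinearMap.range T := by
      rw [Submodule.span_le]
      rintro y ⟨k, i, rfl⟩
      refine ⟨Finsupp.single i (Polynomial.X ^ k), ?_⟩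
      rw [hT, Finsupp.sum_single_index (by simp)]
      simp [Module.End.pow_apply]
    rcases hsub hspan with ⟨c, rfl⟩
    have hc : ∀ z ∈ C N, ⁅z, T c⁆ = 0 := (hVn N (T c)).mp hx'
    rcases key c hc with ⟨h0, _⟩
    rw [SetLike.mem_coe, h0]
    exact Submodule.sum_mem _ fun i _ =>
      Submodule.smul_mem _ _ (Submodule.subset_span ⟨i, rfl⟩)
  · -- second conclusion
    intro c hc0
    have hTc : T c = 0 := by rw [hT]; exact hc0
    have hc : ∀ z ∈ C N, ⁅z, T c⁆ = 0 := by intro z _; rw [hTc, lie_zero]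
    rcases key c hc with ⟨h0, hk⟩
    have hall : ∀ k : ℕ, ∑ i ∈ c.support, (c i).coeff k • v i = 0 := by
      intro k
      rcases Nat.eq_zero_or_pos k with rfl | hkpos
      · rw [← h0, hTc]
      · exact hk k hkpos
    have hcoeff : ∀ i k, (c i).coeff k = 0 := by
      intro i k
      by_cases hi : i ∈ c.support
      · exact linearIndependent_iff'.mp hli c.support (fun i => (c i).coeff k) (hall k) i hi
      · rw [Finsupp.notMem_support_iff.mp hi]; simp
    ext i k
    simp [hcoeff i k]
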